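/- The qutrit T gate T = diag(1, e^{2πi/9}, e^{-2πi/9}) is in the third level of the Clifford hierarchy: T X T† X† and T Z T† Z† are Clifford unitaries, where X and Z are the qutrit Paulis. -/

import Mathlib

open Matrix

noncomputable section

/-- The primitive third root of unity `ω = e^{2πi/3}`. -/
def ω : ℂ := Complex.exp (2 * Real.pi * Complex.I / 3)

/-- The qutrit Pauli X: `X|k⟩ = |k+1 mod 3⟩`. -/
def X : Matrix (ZMod 3) (ZMod 3) ℂ :=
  Matrix.of fun j k => if j = k + 1 then 1 else 0

/-- The qutrit Pauli Z: `Z = diag(1, ω, ω²)`. -/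
def Z : Matrix (ZMod 3) (ZMod 3) ℂ :=
  Matrix.diagonal fun k => ω ^ k.val

/-- The single-qutrit Pauli group (as a submonoid of matrices), generated by
`X`, `Z`, and the phase `ω`. -/
def PauliGrp : Submonoid (Matrix (ZMod 3) (ZMod 3) ℂ) :=
  Submonoid.closure {ω • 1, X, Z}

/-- A Clifford unitary: a unitary normalizing the Pauli group up to phase. -/
def IsClifford (U : Matrix (ZMod 3) (ZMod 3) ℂ) : Prop :=
  U ∈ unitary (Matrix (ZMod 3) (ZMod 3) ℂ) ∧
    ∀ P ∈ PauliGrp, ∃ (c : ℂ) (Q : Matrix (ZMod 3) (ZMod 3) ℂ),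
      Q ∈ PauliGrp ∧ U * P * Uᴴ = c • Q

/-- The qutrit T gate `T = diag(1, e^{2πi/9}, e^{-2πi/9})`. -/
def T : Matrix (ZMod 3) (ZMod 3) ℂ :=
  Matrix.diagonal fun k : ZMod 3 =>
    if k = 1 then Complex.exp (2 * Real.pi * Complex.I / 9)
    else if k = 2 then Complex.exp (-(2 * Real.pi * Complex.I) / 9)
    else 1

/-! ### Auxiliary scalar lemmas -/

/-- The primitive ninth root of unity. -/
def e : ℂ := Complex.exp (2 * Real.pi * Complex.I / 9)

lemma he0 : e ≠ 0 := Complex.exp_ne_zero _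

lemma hse : (starRingEnd ℂ) e = e⁻¹ := by
  rw [e, ← Complex.exp_conj, ← Complex.exp_neg]
  congr 1
  simp only [map_div₀, _root_.map_mul, Complex.conj_I, Complex.conj_ofReal, map_ofNat]
  ring

lemma he9 : e ^ 9 = 1 := by
  rw [e, ← Complex.exp_nat_mul]
  rw [show (9:ℕ) * (2 * (Real.pi:ℂ) * Complex.I / 9) = 2 * Real.pi * Complex.I by
    push_cast; ring]
  exact Complex.exp_two_pi_mul_I

lemma hωe : ω = e ^ 3 := by
  rw [e, ω, ← Complex.exp_nat_mul]
  congr 1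
  push_cast; ring

lemma hω0 : ω ≠ 0 := by rw [hωe]; exact pow_ne_zero _ he0

lemma hsω : (starRingEnd ℂ) ω = ω⁻¹ := by
  rw [hωe, map_pow, hse, inv_pow]

/-- The diagonal entries of T. -/
def t : ZMod 3 → ℂ := fun k => if k = 1 then e else if k = 2 then e⁻¹ else 1

lemma hT : T = Matrix.diagonal t := by
  have h : (fun k : ZMod 3 =>
      if k = 1 then Complex.exp (2 * Real.pi * Complex.I / 9)
      else if k = 2 then Complex.exp (-(2 * Real.pi * Complex.I) / 9)
      else 1) = t := by
    funext k
    unfold t e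
    split_ifs <;> try rfl
    rw [← Complex.exp_neg]
    congr 1
    ring
  rw [T, h]

lemma ht_unit (k : ZMod 3) : t k * (starRingEnd ℂ) (t k) = 1 := by
  rcases (show ∀ k : ZMod 3, k = 0 ∨ k = 1 ∨ k = 2 by decide) k with rfl | rfl | rfl <;>
    simp [t, hse, map_inv₀, he0, show (0:ZMod 3) ≠ 1 from by decide,
      show (0:ZMod 3) ≠ 2 from by decide, show (2:ZMod 3) ≠ 1 from by decide]

/-! ### Matrix computation lemmas -/

lemma Xh : Xᴴ = Matrix.of fun j k => if k = j + 1 then (1:ℂ) else 0 := by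
  ext i j
  simp [X, Matrix.conjTranspose_apply, apply_ite]

lemma X_diag_Xh (f : ZMod 3 → ℂ) :
    X * Matrix.diagonal f * Xᴴ = Matrix.diagonal (fun j => f (j-1)) := by
  rw [Xh]
  ext i j
  rw [Matrix.mul_apply]
  simp only [Matrix.mul_diagonal, X, Matrix.of_apply, Matrix.diagonal_apply]
  rw [show (Finset.univ : Finset (ZMod 3)) = {0,1,2} from by decide]
  rcases (show ∀ k : ZMod 3, k = 0 ∨ k = 1 ∨ k = 2 by decide) i with rfl | rfl | rfl <;> rcases (show ∀ k : ZMod 3, k = 0 ∨ k = 1 ∨ k = 2 by decide) j with rfl | rfl | rfl <;>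
    simp [Finset.sum_insert, Finset.mem_insert,
      show (0:ZMod 3)+1 = 1 from rfl, show (1:ZMod 3)+1 = 2 from rfl,
      show (2:ZMod 3)+1 = 0 from rfl, show (0:ZMod 3)-1 = 2 from rfl,
      show (1:ZMod 3)-1 = 0 from rfl, show (2:ZMod 3)-1 = 1 from rfl,
      show (0:ZMod 3) ≠ 1 from by decide, show (0:ZMod 3) ≠ 2 from by decide,
      show (1:ZMod 3) ≠ 0 from by decide, show (1:ZMod 3) ≠ 2 from by decide,
      show (2:ZMod 3) ≠ 0 from by decide, show (2:ZMod 3) ≠ 1 from by decide]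

/-- The diagonal entries of `T X Tᴴ Xᴴ`. -/
def d : ZMod 3 → ℂ := fun k => t k * (starRingEnd ℂ) (t (k - 1))

lemma hM1 : T * X * Tᴴ * Xᴴ = Matrix.diagonal d := by
  rw [hT, Matrix.diagonal_conjTranspose]
  have : Matrix.diagonal t * X * (Matrix.diagonal t)ᴴ * Xᴴ
      = Matrix.diagonal t * (X * Matrix.diagonal (star t) * Xᴴ) := by
    rw [Matrix.diagonal_conjTranspose]; simp only [mul_assoc]
  rw [Matrix.diagonal_conjTranspose] at this
  rw [this, X_diag_Xh, Matrix.diagonal_mul_diagonal]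
  rfl

lemma hd_unit (k : ZMod 3) : d k * (starRingEnd ℂ) (d k) = 1 := by
  unfold d
  rw [_root_.map_mul, Complex.conj_conj]
  calc t k * (starRingEnd ℂ) (t (k-1)) * ((starRingEnd ℂ) (t k) * t (k - 1))
      = (t k * (starRingEnd ℂ) (t k)) * (t (k-1) * (starRingEnd ℂ) (t (k-1))) := by ring
    _ = 1 := by rw [ht_unit, ht_unit, one_mul]

lemma hd0 : d 0 = e := by
  simp [d, t, hse, map_inv₀, inv_inv, show (0:ZMod 3)-1 = 2 from rfl,
    show (0:ZMod 3) ≠ 1 from by decide, show (0:ZMod 3) ≠ 2 from by decide,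
    show (2:ZMod 3) ≠ 1 from by decide]

lemma hd1 : d 1 = e := by
  simp [d, t, show (1:ZMod 3)-1 = 0 from rfl,
    show (0:ZMod 3) ≠ 1 from by decide, show (0:ZMod 3) ≠ 2 from by decide]

lemma hd2 : d 2 = e⁻¹ * e⁻¹ := by
  simp [d, t, hse, show (2:ZMod 3)-1 = 1 from rfl,
    show (2:ZMod 3) ≠ 1 from by decide]


lemma hd_unit' (k : ZMod 3) : (starRingEnd ℂ) (d k) * d k = 1 := by
  rw [mul_comm]; exact hd_unit k

lemma hUUh : Matrix.diagonal d * (Matrix.diagonal d)ᴴ = 1 := by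
  rw [Matrix.diagonal_conjTranspose, Matrix.diagonal_mul_diagonal]
  ext i j
  rcases eq_or_ne i j with h | h
  · subst h
    simpa [Matrix.diagonal_apply_eq, Matrix.one_apply_eq, Complex.star_def] using hd_unit i
  · simp [Matrix.diagonal_apply_ne _ h, Matrix.one_apply_ne h]

lemma hUhU : (Matrix.diagonal d)ᴴ * Matrix.diagonal d = 1 := by
  rw [Matrix.diagonal_conjTranspose, Matrix.diagonal_mul_diagonal]
  ext i j
  rcases eq_or_ne i j with h | h
  · subst h
    simpa [Matrix.diagonal_apply_eq, Matrix.one_apply_eq, Complex.star_def] using hd_unit' i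
  · simp [Matrix.diagonal_apply_ne _ h, Matrix.one_apply_ne h]

lemma hM1_unitary : Matrix.diagonal d ∈ unitary (Matrix (ZMod 3) (ZMod 3) ℂ) := by
  rw [Unitary.mem_iff]
  exact ⟨by rw [Matrix.star_eq_conjTranspose]; exact hUhU,
    by rw [Matrix.star_eq_conjTranspose]; exact hUUh⟩

lemma conjZ : Matrix.diagonal d * Z * (Matrix.diagonal d)ᴴ = Z := by
  rw [Z, Matrix.diagonal_conjTranspose, Matrix.diagonal_mul_diagonal,
    Matrix.diagonal_mul_diagonal]
  ext i j
  rcases eq_or_ne i j with h | h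
  · subst h
    simp only [Matrix.diagonal_apply_eq, Pi.star_apply, Complex.star_def]
    have h2 : d i * ω ^ i.val * (starRingEnd ℂ) (d i)
        = (d i * (starRingEnd ℂ) (d i)) * ω ^ i.val := by ring
    rw [h2, hd_unit, one_mul]
  · simp [Matrix.diagonal_apply_ne _ h]

lemma conjX : Matrix.diagonal d * X * (Matrix.diagonal d)ᴴ = X * (Z * Z) := by
  rw [Matrix.diagonal_conjTranspose, Z, Matrix.diagonal_mul_diagonal]
  ext i j
  rw [Matrix.mul_diagonal, Matrix.diagonal_mul, Matrix.mul_diagonal]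
  simp only [Pi.star_apply, Complex.star_def, X, Matrix.of_apply]
  rcases (show ∀ k : ZMod 3, k = 0 ∨ k = 1 ∨ k = 2 by decide) i with rfl | rfl | rfl <;> rcases (show ∀ k : ZMod 3, k = 0 ∨ k = 1 ∨ k = 2 by decide) j with rfl | rfl | rfl <;>
    simp [hd0, hd1, hd2, hse, map_inv₀, inv_inv, hωe,
      show (0:ZMod 3)+1 = 1 from rfl, show (1:ZMod 3)+1 = 2 from rfl,
      show (2:ZMod 3)+1 = 0 from rfl,
      show (0:ZMod 3) ≠ 1 from by decide, show (0:ZMod 3) ≠ 2 from by decide,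
      show (1:ZMod 3) ≠ 0 from by decide, show (1:ZMod 3) ≠ 2 from by decide,
      show (2:ZMod 3) ≠ 0 from by decide, show (2:ZMod 3) ≠ 1 from by decide,
      show ZMod.val (0:ZMod 3) = 0 from rfl, show ZMod.val (1:ZMod 3) = 1 from rfl,
      show ZMod.val (2:ZMod 3) = 2 from rfl] <;>
    first
      | rfl
      | exact mul_inv_cancel₀ he0
      | exact inv_mul_cancel₀ he0
      | (field_simp; linear_combination he9)
      | (field_simp; linear_combination -he9)
      | (field_simp; linear_combination e^3*he9)
      | (field_simp; linear_combination -(e^3)*he9)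
      | linear_combination e^3*he9
      | linear_combination -(e^3)*he9
      | linear_combination he9
      | linear_combination -he9
      | (field_simp [he0]; linear_combination he9)
      | (field_simp [he0]; linear_combination -he9)

lemma hωI : ω • (1 : Matrix (ZMod 3) (ZMod 3) ℂ) ∈ PauliGrp :=
  Submonoid.subset_closure (by left; rfl)

lemma hXP : X ∈ PauliGrp :=
  Submonoid.subset_closure (by right; left; rfl)

lemma hZP : Z ∈ PauliGrp :=
  Submonoid.subset_closure (by right; right; rfl)

lemma clifford_diag_d : IsClifford (Matrix.diagonal d) := by
  refine ⟨hM1_unitary, ?_⟩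
  intro P hP
  induction hP using Submonoid.closure_induction with
  | mem x hx =>
    rcases hx with h | h | h
    · refine ⟨ω, 1, one_mem _, ?_⟩
      rw [h, mul_smul_comm, smul_mul_assoc, mul_one, hUUh]
    · refine ⟨1, X * (Z * Z), mul_mem hXP (mul_mem hZP hZP), ?_⟩
      rw [h, one_smul, conjX]
    · rw [Set.mem_singleton_iff] at h
      refine ⟨1, Z, hZP, ?_⟩
      rw [h, one_smul, conjZ]
  | one => exact ⟨1, 1, one_mem _, by rw [mul_one, hUUh, one_smul]⟩
  | mul x y hx hy ihx ihy =>
    obtain ⟨c1, Q1, hQ1, e1⟩ := ihx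
    obtain ⟨c2, Q2, hQ2, e2⟩ := ihy
    refine ⟨c1 * c2, Q1 * Q2, mul_mem hQ1 hQ2, ?_⟩
    have h : Matrix.diagonal d * (x * y) * (Matrix.diagonal d)ᴴ
        = (Matrix.diagonal d * x * (Matrix.diagonal d)ᴴ) *
          (Matrix.diagonal d * y * (Matrix.diagonal d)ᴴ) := by
      have h2 : (Matrix.diagonal d * x * (Matrix.diagonal d)ᴴ) *
          (Matrix.diagonal d * y * (Matrix.diagonal d)ᴴ)
          = Matrix.diagonal d * x * ((Matrix.diagonal d)ᴴ * Matrix.diagonal d) *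
            (y * (Matrix.diagonal d)ᴴ) := by
        simp only [mul_assoc]
      rw [h2, hUhU, mul_one]
      simp only [mul_assoc]
    rw [h, e1, e2, smul_mul_assoc, mul_smul_comm, smul_smul]

lemma hM2 : T * Z * Tᴴ * Zᴴ = 1 := by
  rw [hT, Z, Matrix.diagonal_conjTranspose, Matrix.diagonal_conjTranspose,
    Matrix.diagonal_mul_diagonal, Matrix.diagonal_mul_diagonal,
    Matrix.diagonal_mul_diagonal]
  ext i j
  rcases eq_or_ne i j with h | h
  · subst h
    simp only [Matrix.diagonal_apply_eq, Matrix.one_apply_eq, Pi.star_apply,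
      Complex.star_def, map_pow, hsω, inv_pow]
    have h2 : t i * ω ^ i.val * (starRingEnd ℂ) (t i) * (ω ^ i.val)⁻¹
        = (t i * (starRingEnd ℂ) (t i)) * (ω ^ i.val * (ω ^ i.val)⁻¹) := by ring
    rw [h2, ht_unit, one_mul, mul_inv_cancel₀ (pow_ne_zero _ hω0)]
  · simp [Matrix.diagonal_apply_ne _ h, Matrix.one_apply_ne h]

lemma isClifford_one : IsClifford 1 :=
  ⟨one_mem _, fun P hP => ⟨1, P, hP, by simp⟩⟩

/-- The qutrit T gate lies in the third level of the Clifford hierarchy: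
`T X T† X†` and `T Z T† Z†` are Clifford unitaries. -/
theorem T_third_level :
    IsClifford (T * X * Tᴴ * Xᴴ) ∧ IsClifford (T * Z * Tᴴ * Zᴴ) := by
  constructor
  · rw [hM1]; exact clifford_diag_d
  · rw [hM2]; exact isClifford_one
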